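/- arXiv:2012.05738 — 9 statements merged into one kernel-verified Lean document; each statement's English description precedes it below -/
import Mathlib

section
/- Consider the MLP update function on [0,1]^n whose i-th component is u_i(s) = 1/(1 + ((1-β_i)/β_i)·exp(-Σ_{(b,i)∈E} w(b,i)·s_b)), with β_i ∈ (0,1). If every argument has at most P parents and all edge weights satisfy |w(b,i)| ≤ W with W·P < 4, then each component u_i is Lipschitz continuous with constant W·P/4 < 1 with respect to the sup-norm, and hence u is a contraction. -/
lemma logistic_lip (c : ℝ) (hc : 0 ≤ c) (a b : ℝ) :
    |(1 + c * Real.exp (-a))⁻¹ - (1 + c * Real.exp (-b))⁻¹| ≤ (1/4) * |a - b| := by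
  have key : ∀ x : ℝ, HasDerivAt (fun x => (1 + c * Real.exp (-x))⁻¹)
      (c * Real.exp (-x) / (1 + c * Real.exp (-x)) ^ 2) x := by
    intro x
    have h1 : HasDerivAt (fun x : ℝ => 1 + c * Real.exp (-x))
        (c * (Real.exp (-x) * (-1))) x := by
      have := ((Real.hasDerivAt_exp (-x)).comp x (hasDerivAt_neg x)).const_mul c
      simpa using this.const_add 1
    have hpos : (0:ℝ) < 1 + c * Real.exp (-x) := by positivity
    have := h1.inv (ne_of_gt hpos)
    refine this.congr_deriv ?_
    ring
  have hlip : LipschitzWith (1/4) (fun x => (1 + c * Real.exp (-x))⁻¹) := by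
    apply lipschitzWith_of_nnnorm_deriv_le (fun x => (key x).differentiableAt)
    intro x
    rw [(key x).deriv]
    have hpos : (0:ℝ) < 1 + c * Real.exp (-x) := by positivity
    have ht : 0 ≤ c * Real.exp (-x) := by positivity
    have hb : c * Real.exp (-x) / (1 + c * Real.exp (-x)) ^ 2 ≤ 1/4 := by
      rw [div_le_iff₀ (by positivity)]
      nlinarith [sq_nonneg (1 - c * Real.exp (-x))]
    have : ‖c * Real.exp (-x) / (1 + c * Real.exp (-x)) ^ 2‖ ≤ ((1/4 : NNReal) : ℝ) := by
      rw [Real.norm_eq_abs, abs_of_nonneg (by positivity)]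
      simpa using hb
    exact this
  have := hlip.dist_le_mul a b
  simpa [Real.dist_eq] using this

theorem mlp_update_components_lipschitz (n : ℕ)
    (Edg : Finset (Fin n × Fin n)) (w : Fin n → Fin n → ℝ) (β : Fin n → ℝ)
    (hβ : ∀ i, 0 < β i ∧ β i < 1)
    (P : ℕ) (W : ℝ) (hW0 : 0 ≤ W)
    (hP : ∀ i, (Edg.filter (fun p => p.2 = i)).card ≤ P)
    (hW : ∀ p ∈ Edg, |w p.1 p.2| ≤ W)
    (hWP : W * (P : ℝ) < 4)
    (u : (Fin n → ℝ) → (Fin n → ℝ))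
    (hu : ∀ s i, u s i =
      1 / (1 + ((1 - β i) / β i) *
        Real.exp (-(∑ p ∈ Edg.filter (fun p => p.2 = i), w p.1 p.2 * s p.1)))) :
    (∀ (i : Fin n) (s t : Fin n → ℝ),
        (∀ b, s b ∈ Set.Icc (0 : ℝ) 1) → (∀ b, t b ∈ Set.Icc (0 : ℝ) 1) →
        |u s i - u t i| ≤ (W * (P : ℝ) / 4) * ‖s - t‖) ∧
    W * (P : ℝ) / 4 < 1 ∧
    (∀ s t : Fin n → ℝ,
        (∀ b, s b ∈ Set.Icc (0 : ℝ) 1) → (∀ b, t b ∈ Set.Icc (0 : ℝ) 1) →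
        ‖u s - u t‖ ≤ (W * (P : ℝ) / 4) * ‖s - t‖) := by
  have hcomp : ∀ (i : Fin n) (s t : Fin n → ℝ),
      |u s i - u t i| ≤ (W * (P : ℝ) / 4) * ‖s - t‖ := by
    intro i s t
    have hc : 0 ≤ (1 - β i) / β i := by
      obtain ⟨h0, h1⟩ := hβ i
      exact div_nonneg (by linarith) h0.le
    have h1 := logistic_lip ((1 - β i) / β i) hc
      (∑ p ∈ Edg.filter (fun p => p.2 = i), w p.1 p.2 * s p.1)
      (∑ p ∈ Edg.filter (fun p => p.2 = i), w p.1 p.2 * t p.1)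
    rw [hu s i, hu t i]
    simp only [one_div]
    refine le_trans h1 ?_
    have hsum : |(∑ p ∈ Edg.filter (fun p => p.2 = i), w p.1 p.2 * s p.1) -
        (∑ p ∈ Edg.filter (fun p => p.2 = i), w p.1 p.2 * t p.1)|
        ≤ W * (P : ℝ) * ‖s - t‖ := by
      rw [← Finset.sum_sub_distrib]
      calc |∑ p ∈ Edg.filter (fun p => p.2 = i), (w p.1 p.2 * s p.1 - w p.1 p.2 * t p.1)|
          ≤ ∑ p ∈ Edg.filter (fun p => p.2 = i), |w p.1 p.2 * s p.1 - w p.1 p.2 * t p.1| :=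
            Finset.abs_sum_le_sum_abs _ _
        _ ≤ ∑ p ∈ Edg.filter (fun p => p.2 = i), W * ‖s - t‖ := by
            apply Finset.sum_le_sum
            intro p hp
            rw [← mul_sub, abs_mul]
            have hw := hW p (Finset.mem_filter.mp hp).1
            have hst : |s p.1 - t p.1| ≤ ‖s - t‖ := by
              have := norm_le_pi_norm (s - t) p.1
              simpa [Real.norm_eq_abs] using this
            exact mul_le_mul hw hst (abs_nonneg _) hW0
        _ = (Edg.filter (fun p => p.2 = i)).card * (W * ‖s - t‖) := by
            rw [Finset.sum_const, nsmul_eq_mul]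
        _ ≤ W * (P : ℝ) * ‖s - t‖ := by
            have hcard := hP i
            have : ((Edg.filter (fun p => p.2 = i)).card : ℝ) ≤ (P : ℝ) :=
              Nat.cast_le.mpr hcard
            have hn : 0 ≤ W * ‖s - t‖ := mul_nonneg hW0 (norm_nonneg _)
            nlinarith [norm_nonneg (s - t)]
    calc (1/4) * |(∑ p ∈ Edg.filter (fun p => p.2 = i), w p.1 p.2 * s p.1) -
          (∑ p ∈ Edg.filter (fun p => p.2 = i), w p.1 p.2 * t p.1)|
        ≤ (1/4) * (W * (P : ℝ) * ‖s - t‖) := by linarith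
      _ = (W * (P : ℝ) / 4) * ‖s - t‖ := by ring
  refine ⟨fun i s t _ _ => hcomp i s t, by linarith, ?_⟩
  intro s t _ _
  have hK : 0 ≤ W * (P : ℝ) / 4 := by positivity
  rw [pi_norm_le_iff_of_nonneg (mul_nonneg hK (norm_nonneg _))]
  intro i
  simpa [Real.norm_eq_abs] using hcomp i s t
end

section
/- If the QBAF is acyclic (the edge relation E induces a directed acyclic graph), then the iterative MLP-based strength computation converges: for each argument a, the sequence s_a^(k) is eventually constant, with s_a^(k) = s_a^(d) for all k ≥ d where d is the length of the longest directed path ending in a. -/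
theorem mlp_acyclic_converges (n : ℕ)
    (Edg : Finset (Fin n × Fin n)) (w : Fin n → Fin n → ℝ) (β : Fin n → ℝ)
    (hβ : ∀ i, 0 < β i ∧ β i < 1)
    (depth : Fin n → ℕ)
    (hacyclic : ∀ p ∈ Edg, depth p.1 < depth p.2)
    (u : (Fin n → ℝ) → (Fin n → ℝ))
    (hu : ∀ s i, u s i =
      1 / (1 + ((1 - β i) / β i) *
        Real.exp (-(∑ p ∈ Edg.filter (fun p => p.2 = i), w p.1 p.2 * s p.1)))) :
    ∀ (a : Fin n) (k : ℕ), depth a ≤ k → u^[k] β a = u^[depth a] β a := by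
  have step : ∀ k a, depth a ≤ k → u^[k+1] β a = u^[k] β a := by
    intro k
    induction k using Nat.strong_induction_on with
    | _ k ih =>
      intro a ha
      have h1 : u^[k+1] β a = u (u^[k] β) a := by
        rw [Function.iterate_succ_apply']
      cases k with
      | zero =>
        have hd : depth a = 0 := Nat.le_zero.mp ha
        have hfilt : Edg.filter (fun p => p.2 = a) = ∅ := by
          apply Finset.filter_eq_empty_iff.mpr
          intro p hp hpa
          have h2 := hacyclic p hp
          rw [hpa, hd] at h2
          exact absurd h2 (Nat.not_lt_zero _)
        have hb := hβ a
        rw [h1, hu, hfilt]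
        simp only [Function.iterate_zero, id_eq, Finset.sum_empty, neg_zero,
          Real.exp_zero, mul_one]
        have hβne : β a ≠ 0 := ne_of_gt hb.1
        field_simp
        ring
      | succ m =>
        rw [h1, hu]
        rw [show u^[m+1] β a = u (u^[m] β) a from Function.iterate_succ_apply' u m β ▸ rfl, hu]
        congr 5
        apply Finset.sum_congr rfl
        intro p hp
        simp only [Finset.mem_filter] at hp
        have hdb : depth p.1 ≤ m := by
          have h3 := hacyclic p hp.1
          rw [hp.2] at h3
          omega
        rw [ih m (Nat.lt_succ_self m) p.1 hdb]
  intro a k hk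
  induction k, hk using Nat.le_induction with
  | base => rfl
  | succ m hm ihm => rw [step m a hm, ihm]
end

section
/- Equivalence: in any fixed point σ of the MLP update function, if arguments a and b have equal base scores β(a) = β(b) and there are bijections h : Att(a) → Att(b) and h' : Sup(a) → Sup(b) with σ(x) = σ(h(x)) and σ(y) = σ(h'(y)) for all attackers x and supporters y of a, then σ(a) = σ(b). -/
theorem mlp_equivalence {A : Type} [DecidableEq A]
    (Att Sup : A → Finset A) (σ β : A → ℝ)
    (hfix : ∀ c, σ c = 1 / (1 + ((1 - β c) / β c) *
      Real.exp (∑ x ∈ Att c, σ x - ∑ x ∈ Sup c, σ x)))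
    (a b : A) (hβa : 0 < β a) (hβa1 : β a < 1) (hβ : β a = β b)
    (h h' : A → A)
    (hbij : Set.BijOn h ↑(Att a) ↑(Att b))
    (hbij' : Set.BijOn h' ↑(Sup a) ↑(Sup b))
    (hσh : ∀ x ∈ Att a, σ x = σ (h x))
    (hσh' : ∀ y ∈ Sup a, σ y = σ (h' y)) :
    σ a = σ b := by
  have hAtt : ∑ x ∈ Att a, σ x = ∑ x ∈ Att b, σ x := by
    refine Finset.sum_nbij h (fun x hx => ?_) ?_ ?_ (fun x hx => hσh x hx)
    · exact hbij.mapsTo hx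
    · exact hbij.injOn
    · intro y hy
      obtain ⟨x, hx, hxy⟩ := hbij.surjOn hy
      exact ⟨x, by simpa using hx, hxy⟩
  have hSup : ∑ x ∈ Sup a, σ x = ∑ x ∈ Sup b, σ x := by
    refine Finset.sum_nbij h' (fun x hx => ?_) ?_ ?_ (fun x hx => hσh' x hx)
    · exact hbij'.mapsTo hx
    · exact hbij'.injOn
    · intro y hy
      obtain ⟨x, hx, hxy⟩ := hbij'.surjOn hy
      exact ⟨x, by simpa using hx, hxy⟩
  rw [hfix a, hfix b, hβ, hAtt, hSup]
end

section
/- Neutrality: in any fixed point σ of the MLP update function, if β(a) = β(b), Att(a) ⊆ Att(b), Sup(a) ⊆ Sup(b), Att(b) ∪ Sup(b) = Att(a) ∪ Sup(a) ∪ {d} with σ(d) = 0, then σ(a) = σ(b). -/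
theorem mlp_neutrality {A : Type} [DecidableEq A]
    (Att Sup : A → Finset A) (σ β : A → ℝ)
    (hfix : ∀ c, σ c = 1 / (1 + ((1 - β c) / β c) *
      Real.exp (∑ x ∈ Att c, σ x - ∑ x ∈ Sup c, σ x)))
    (hdisj : ∀ c, Disjoint (Att c) (Sup c))
    (a b d : A) (hβa : 0 < β a) (hβa1 : β a < 1) (hβ : β a = β b)
    (hAtt : Att a ⊆ Att b) (hSup : Sup a ⊆ Sup b)
    (hunion : Att b ∪ Sup b = Att a ∪ Sup a ∪ {d})
    (hd : σ d = 0) :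
    σ a = σ b := by
  have hA : ∑ x ∈ Att a, σ x = ∑ x ∈ Att b, σ x := by
    apply Finset.sum_subset hAtt
    intro x hx hxa
    have hx' : x ∈ Att a ∪ Sup a ∪ {d} := by
      rw [← hunion]; exact Finset.mem_union_left _ hx
    rcases Finset.mem_union.1 hx' with h | h
    · rcases Finset.mem_union.1 h with h | h
      · exact absurd h hxa
      · exact absurd (hSup h) (Finset.disjoint_left.1 (hdisj b) hx)
    · have : x = d := Finset.mem_singleton.1 h
      rw [this, hd]
  have hS : ∑ x ∈ Sup a, σ x = ∑ x ∈ Sup b, σ x := by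
    apply Finset.sum_subset hSup
    intro x hx hxa
    have hx' : x ∈ Att a ∪ Sup a ∪ {d} := by
      rw [← hunion]; exact Finset.mem_union_right _ hx
    rcases Finset.mem_union.1 hx' with h | h
    · rcases Finset.mem_union.1 h with h | h
      · exact absurd (hAtt h) (Finset.disjoint_left.1 (hdisj b) · hx)
      · exact absurd h hxa
    · have : x = d := Finset.mem_singleton.1 h
      rw [this, hd]
  rw [hfix a, hfix b, hβ, hA, hS]
end

section
/- Monotony: in any fixed point σ of the MLP update function, if 0 < β(a) = β(b) < 1, Att(a) ⊆ Att(b) and Sup(a) ⊇ Sup(b), then σ(a) ≥ σ(b). -/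
theorem mlp_monotony {A : Type} [DecidableEq A]
    (Att Sup : A → Finset A) (σ β : A → ℝ)
    (hfix : ∀ c, σ c = 1 / (1 + ((1 - β c) / β c) *
      Real.exp (∑ x ∈ Att c, σ x - ∑ x ∈ Sup c, σ x)))
    (hσ : ∀ c, 0 ≤ σ c ∧ σ c ≤ 1)
    (a b : A) (hβ0 : 0 < β a) (hβ : β a = β b) (hβ1 : β b < 1)
    (hAtt : Att a ⊆ Att b) (hSup : Sup b ⊆ Sup a) :
    σ a ≥ σ b := by
  have hk : 0 < (1 - β a) / β a := by
    apply div_pos _ hβ0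
    linarith [hβ1, hβ.symm ▸ hβ1]
  set k := (1 - β a) / β a with hkdef
  have hSa : ∑ x ∈ Att a, σ x ≤ ∑ x ∈ Att b, σ x :=
    Finset.sum_le_sum_of_subset_of_nonneg hAtt (fun x _ _ => (hσ x).1)
  have hSb : ∑ x ∈ Sup b, σ x ≤ ∑ x ∈ Sup a, σ x :=
    Finset.sum_le_sum_of_subset_of_nonneg hSup (fun x _ _ => (hσ x).1)
  have hexp : Real.exp (∑ x ∈ Att a, σ x - ∑ x ∈ Sup a, σ x) ≤
      Real.exp (∑ x ∈ Att b, σ x - ∑ x ∈ Sup b, σ x) :=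
    Real.exp_le_exp.mpr (by linarith)
  have hβb : (1 - β b) / β b = k := by rw [hkdef, hβ]
  rw [hfix a, hfix b, hβb]
  have h1 : 0 < 1 + k * Real.exp (∑ x ∈ Att a, σ x - ∑ x ∈ Sup a, σ x) := by
    positivity
  have h2 : 0 < 1 + k * Real.exp (∑ x ∈ Att b, σ x - ∑ x ∈ Sup b, σ x) := by
    positivity
  apply one_div_le_one_div_of_le h1
  nlinarith [Real.exp_pos (∑ x ∈ Att a, σ x - ∑ x ∈ Sup a, σ x)]
end

section
/- Strict Monotony: in any fixed point σ of the MLP update function, if 0 < β(a) = β(b) < 1, Att(a) ⊆ Att(b), Sup(a) ⊇ Sup(b), and additionally either Att(a)⁺ ⊊ Att(b)⁺ or Sup(a)⁺ ⊋ Sup(b)⁺ (where S⁺ = {x ∈ S : σ(x) > 0}), then σ(a) > σ(b). -/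
theorem mlp_strict_monotony {A : Type} [DecidableEq A]
    (Att Sup : A → Finset A) (σ β : A → ℝ)
    (hfix : ∀ c, σ c = 1 / (1 + ((1 - β c) / β c) *
      Real.exp (∑ x ∈ Att c, σ x - ∑ x ∈ Sup c, σ x)))
    (hσ : ∀ c, 0 ≤ σ c ∧ σ c ≤ 1)
    (a b : A) (hβ0 : 0 < β a) (hβ : β a = β b) (hβ1 : β b < 1)
    (hAtt : Att a ⊆ Att b) (hSup : Sup b ⊆ Sup a)
    (hstrict : (Att a).filter (fun x => 0 < σ x) ⊂ (Att b).filter (fun x => 0 < σ x) ∨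
               (Sup b).filter (fun x => 0 < σ x) ⊂ (Sup a).filter (fun x => 0 < σ x)) :
    σ a > σ b := by
  have hc : 0 < (1 - β a) / β a := div_pos (by linarith) hβ0
  have hAle : ∑ x ∈ Att a, σ x ≤ ∑ x ∈ Att b, σ x :=
    Finset.sum_le_sum_of_subset_of_nonneg hAtt (fun x _ _ => (hσ x).1)
  have hSle : ∑ x ∈ Sup b, σ x ≤ ∑ x ∈ Sup a, σ x :=
    Finset.sum_le_sum_of_subset_of_nonneg hSup (fun x _ _ => (hσ x).1)
  have hE : (∑ x ∈ Att a, σ x - ∑ x ∈ Sup a, σ x) <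
      (∑ x ∈ Att b, σ x - ∑ x ∈ Sup b, σ x) := by
    rcases hstrict with h | h
    · obtain ⟨x, hxb, hxa⟩ := (Finset.ssubset_iff_of_subset h.subset).mp h
      simp only [Finset.mem_filter] at hxb hxa
      have hxA : x ∉ Att a := fun hx => hxa ⟨hx, hxb.2⟩
      have : ∑ x ∈ Att a, σ x < ∑ x ∈ Att b, σ x :=
        Finset.sum_lt_sum_of_subset hAtt hxb.1 hxA hxb.2 (fun j _ _ => (hσ j).1)
      linarith
    · obtain ⟨x, hxa, hxb⟩ := (Finset.ssubset_iff_of_subset h.subset).mp h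
      simp only [Finset.mem_filter] at hxa hxb
      have hxS : x ∉ Sup b := fun hx => hxb ⟨hx, hxa.2⟩
      have : ∑ x ∈ Sup b, σ x < ∑ x ∈ Sup a, σ x :=
        Finset.sum_lt_sum_of_subset hSup hxa.1 hxS hxa.2 (fun j _ _ => (hσ j).1)
      linarith
  have hexp : Real.exp (∑ x ∈ Att a, σ x - ∑ x ∈ Sup a, σ x) <
      Real.exp (∑ x ∈ Att b, σ x - ∑ x ∈ Sup b, σ x) := Real.exp_lt_exp.mpr hE
  rw [hfix a, hfix b, ← hβ]
  have h1 : 0 < 1 + (1 - β a) / β a *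
      Real.exp (∑ x ∈ Att a, σ x - ∑ x ∈ Sup a, σ x) := by positivity
  apply one_div_lt_one_div_of_lt h1
  have := mul_lt_mul_of_pos_left hexp hc
  linarith
end

section
/- Reinforcement: in any fixed point σ of the MLP update function, if 0 < β(a) = β(b) < 1, Att(a) \ {x} = Att(b) \ {y} with x ∈ Att(a), y ∈ Att(b), Sup(a) \ {x'} = Sup(b) \ {y'} with x' ∈ Sup(a), y' ∈ Sup(b), and σ(x) ≤ σ(y) and σ(x') ≥ σ(y'), then σ(a) ≥ σ(b). -/
theorem mlp_reinforcement {A : Type} [DecidableEq A]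
    (Att Sup : A → Finset A) (σ β : A → ℝ)
    (hfix : ∀ c, σ c = 1 / (1 + ((1 - β c) / β c) *
      Real.exp (∑ u ∈ Att c, σ u - ∑ u ∈ Sup c, σ u)))
    (hσ : ∀ c, 0 ≤ σ c ∧ σ c ≤ 1)
    (a b x y x' y' : A)
    (hβ0 : 0 < β a) (hβ : β a = β b) (hβ1 : β b < 1)
    (hx : x ∈ Att a) (hy : y ∈ Att b)
    (hAtt : (Att a).erase x = (Att b).erase y)
    (hx' : x' ∈ Sup a) (hy' : y' ∈ Sup b)
    (hSup : (Sup a).erase x' = (Sup b).erase y')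
    (hxy : σ x ≤ σ y) (hxy' : σ x' ≥ σ y') :
    σ a ≥ σ b := by
  have hA : ∑ u ∈ Att a, σ u - σ x = ∑ u ∈ Att b, σ u - σ y := by
    rw [← Finset.sum_erase_eq_sub hx, ← Finset.sum_erase_eq_sub hy, hAtt]
  have hS : ∑ u ∈ Sup a, σ u - σ x' = ∑ u ∈ Sup b, σ u - σ y' := by
    rw [← Finset.sum_erase_eq_sub hx', ← Finset.sum_erase_eq_sub hy', hSup]
  have hE : (∑ u ∈ Att a, σ u - ∑ u ∈ Sup a, σ u) ≤
      (∑ u ∈ Att b, σ u - ∑ u ∈ Sup b, σ u) := by linarith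
  have hc : 0 ≤ (1 - β a) / β a := div_nonneg (by rw [hβ]; linarith) hβ0.le
  have key : ∀ E F : ℝ, E ≤ F →
      1 / (1 + ((1 - β a) / β a) * Real.exp F) ≤
      1 / (1 + ((1 - β a) / β a) * Real.exp E) := by
    intro E F hEF
    have h1 : (0:ℝ) < 1 + ((1 - β a) / β a) * Real.exp E :=
      lt_add_of_lt_of_nonneg one_pos (mul_nonneg hc (Real.exp_pos E).le)
    exact one_div_le_one_div_of_le h1 (by
      have := mul_le_mul_of_nonneg_left (Real.exp_le_exp.mpr hEF) hc
      linarith)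
  have := key _ _ hE
  rw [hfix a, hfix b, ← hβ]
  exact this
end

section
/- Franklin: in any fixed point σ of the MLP update function, if β(a) = β(b) ∈ (0,1), Att(a) = Att(b) ∪ {x}, Sup(a) = Sup(b) ∪ {y} with x ∉ Att(b), y ∉ Sup(b), and σ(x) = σ(y), then σ(a) = σ(b). -/
theorem mlp_franklin {A : Type} [DecidableEq A]
    (Att Sup : A → Finset A) (σ β : A → ℝ)
    (hfix : ∀ c, σ c = 1 / (1 + ((1 - β c) / β c) *
      Real.exp (∑ u ∈ Att c, σ u - ∑ u ∈ Sup c, σ u)))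
    (a b x y : A)
    (hβ0 : 0 < β a) (hβ1 : β a < 1) (hβ : β a = β b)
    (hxb : x ∉ Att b) (hyb : y ∉ Sup b)
    (hAtt : Att a = insert x (Att b)) (hSup : Sup a = insert y (Sup b))
    (hxy : σ x = σ y) :
    σ a = σ b := by
  rw [hfix a, hfix b, hβ, hAtt, hSup, Finset.sum_insert hxb, Finset.sum_insert hyb, hxy]
  ring_nf
end

section
/- Weakening: in any fixed point σ of the MLP update function, suppose β(a) ∈ (0,1) and there is an injection g : Sup(a) → Att(a) with σ(x) ≤ σ(g(x)) for all x ∈ Sup(a), and additionally either there exists d ∈ Att(a) \ g(Sup(a)) with σ(d) > 0, or there exists x ∈ Sup(a) with σ(x) < σ(g(x)). Then σ(a) < β(a). -/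
theorem mlp_weakening {A : Type} [DecidableEq A]
    (Att Sup : A → Finset A) (σ β : A → ℝ)
    (hfix : ∀ c, σ c = 1 / (1 + ((1 - β c) / β c) *
      Real.exp (∑ x ∈ Att c, σ x - ∑ x ∈ Sup c, σ x)))
    (hσ : ∀ c, 0 ≤ σ c)
    (a : A) (hβ0 : 0 < β a) (hβ1 : β a < 1)
    (g : A → A)
    (hmaps : ∀ x ∈ Sup a, g x ∈ Att a)
    (hinj : Set.InjOn g ↑(Sup a))
    (hle : ∀ x ∈ Sup a, σ x ≤ σ (g x))
    (hstrict : (∃ d ∈ Att a, d ∉ (Sup a).image g ∧ 0 < σ d) ∨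
               ∃ x ∈ Sup a, σ x < σ (g x)) :
    σ a < β a := by
  have himg : (Sup a).image g ⊆ Att a := by
    intro y hy
    obtain ⟨x, hx, rfl⟩ := Finset.mem_image.mp hy
    exact hmaps x hx
  have h1 : ∑ x ∈ Sup a, σ (g x) = ∑ y ∈ (Sup a).image g, σ y :=
    (Finset.sum_image (fun x hx y hy h => hinj hx hy h)).symm
  have hA : ∑ x ∈ Sup a, σ x < ∑ x ∈ Att a, σ x := by
    rcases hstrict with ⟨d, hd, hdn, hdp⟩ | ⟨x, hx, hlt⟩
    · calc ∑ x ∈ Sup a, σ x ≤ ∑ x ∈ Sup a, σ (g x) := Finset.sum_le_sum hle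
        _ = ∑ y ∈ (Sup a).image g, σ y := h1
        _ < ∑ y ∈ Att a, σ y :=
          Finset.sum_lt_sum_of_subset himg hd hdn hdp (fun i _ _ => hσ i)
    · calc ∑ x ∈ Sup a, σ x < ∑ x ∈ Sup a, σ (g x) :=
          Finset.sum_lt_sum (fun i hi => hle i hi) ⟨x, hx, hlt⟩
        _ = ∑ y ∈ (Sup a).image g, σ y := h1
        _ ≤ ∑ y ∈ Att a, σ y :=
          Finset.sum_le_sum_of_subset_of_nonneg himg (fun i _ _ => hσ i)
  have hApos : 0 < ∑ x ∈ Att a, σ x - ∑ x ∈ Sup a, σ x := by linarith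
  have hc : 0 < (1 - β a) / β a := div_pos (by linarith) hβ0
  have hexp : 1 < Real.exp (∑ x ∈ Att a, σ x - ∑ x ∈ Sup a, σ x) := by
    rw [← Real.exp_zero]; exact Real.exp_lt_exp.mpr hApos
  have hβeq : β a = 1 / (1 + (1 - β a) / β a) := by
    field_simp
    ring
  calc σ a = 1 / (1 + (1 - β a) / β a *
        Real.exp (∑ x ∈ Att a, σ x - ∑ x ∈ Sup a, σ x)) := hfix a
    _ < 1 / (1 + (1 - β a) / β a) :=
        one_div_lt_one_div_of_lt (by linarith) (by nlinarith)
    _ = β a := hβeq.symm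
end
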